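/- For every n > 1, the number of n×n magog matrices whose (1,n) entry equals 1 equals the number of n×n magog matrices whose (1,n−1) entry equals 1, i.e. |Magog_n(1,n)| = |Magog_n(1,n−1)|. -/

import Mathlib

/-- An `n × n` square sign matrix: a `{0, 1, -1}`-matrix whose rows and columns
all sum to 1, whose partial column sums lie in `{0, 1}`, and whose partial row
sums are nonnegative. -/
def IsSquareSign (n : ℕ) (A : Fin n → Fin n → ℤ) : Prop :=
  (∀ i j, A i j = -1 ∨ A i j = 0 ∨ A i j = 1) ∧
  (∀ j, ∑ i, A i j = 1) ∧
  (∀ i, ∑ j, A i j = 1) ∧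
  (∀ i j : Fin n, 0 ≤ ∑ i' ∈ Finset.Iic i, A i' j ∧ ∑ i' ∈ Finset.Iic i, A i' j ≤ 1) ∧
  (∀ i j : Fin n, 0 ≤ ∑ j' ∈ Finset.Iic j, A i j')

/-- An `n × n` magog matrix: a square sign matrix satisfying the
`(i,j)`-special inequalities (stated here with 0-based indices `i, j`,
corresponding to the paper's 1-based `i+1, j+1` with `1 ≤ i, j ≤ n-2`). -/
def IsMagog (n : ℕ) (A : Fin n → Fin n → ℤ) : Prop :=
  IsSquareSign n A ∧
  ∀ (i j : ℕ) (hi : i + 2 < n) (hj : j + 2 < n),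
    0 ≤ (∑ j' ∈ Finset.Iic (⟨j, by omega⟩ : Fin n), A ⟨i + 1, by omega⟩ j')
      + (∑ i' ∈ Finset.Iic (⟨i + 1, by omega⟩ : Fin n), A i' ⟨j + 1, by omega⟩)
      - (∑ i' ∈ Finset.Iic (⟨i, by omega⟩ : Fin n), A i' ⟨j, by omega⟩)

namespace MagogAux

variable (n : ℕ) (hn : 1 < n) (ε : ℤ)

lemma aux_lt0 (m : ℕ) (hm : 1 < m) : 0 < m := by omega
lemma aux_lt2 (m : ℕ) (hm : 1 < m) : m - 2 < m := by omega
lemma aux_lt1 (m : ℕ) (hm : 1 < m) : m - 1 < m := by omega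

def I0 : Fin n := ⟨0, aux_lt0 n hn⟩
def I1 : Fin n := ⟨1, hn⟩
def C2 : Fin n := ⟨n - 2, aux_lt2 n hn⟩
def D1 : Fin n := ⟨n - 1, aux_lt1 n hn⟩

def mgE : Fin n → ℤ := fun i =>
  ε * ((if i = I0 n hn then 1 else 0) - (if i = I1 n hn then 1 else 0))

def mgF : Fin n → ℤ := fun j =>
  (if j = C2 n hn then 1 else 0) - (if j = D1 n hn then 1 else 0)

def mgStep (A : Fin n → Fin n → ℤ) : Fin n → Fin n → ℤ :=
  fun i j => A i j + mgE n hn ε i * mgF n hn j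

variable {n hn ε}

lemma ne_I0_I1 : I0 n hn ≠ I1 n hn := by simp [I0, I1, Fin.ext_iff]

lemma ne_C2_D1 : C2 n hn ≠ D1 n hn := by
  simp only [C2, D1, ne_eq, Fin.mk.injEq]; omega

lemma mgE_I0 : mgE n hn ε (I0 n hn) = ε := by
  simp [mgE, ne_I0_I1]

lemma mgE_I1 : mgE n hn ε (I1 n hn) = -ε := by
  simp [mgE, (ne_I0_I1 (n := n) (hn := hn)).symm]

lemma mgE_eq0 {i : Fin n} (h0 : i ≠ I0 n hn) (h1 : i ≠ I1 n hn) : mgE n hn ε i = 0 := by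
  simp [mgE, h0, h1]

lemma mgF_C2 : mgF n hn (C2 n hn) = 1 := by simp [mgF, ne_C2_D1]
lemma mgF_D1 : mgF n hn (D1 n hn) = -1 := by
  simp [mgF, (ne_C2_D1 (n := n) (hn := hn)).symm]
lemma mgF_eq0 {j : Fin n} (hc : j ≠ C2 n hn) (hd : j ≠ D1 n hn) : mgF n hn j = 0 := by
  simp [mgF, hc, hd]

lemma mem_Iic_I0 (i : Fin n) : I0 n hn ∈ Finset.Iic i := by
  simp [I0, Fin.le_def]

lemma Iic_I0 : Finset.Iic (I0 n hn) = {I0 n hn} := by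
  ext x; simp [I0, Fin.le_def, Fin.ext_iff, Nat.le_zero]

lemma Iic_I1 : Finset.Iic (I1 n hn) = {I0 n hn, I1 n hn} := by
  ext x
  simp only [Finset.mem_Iic, Finset.mem_insert, Finset.mem_singleton, I0, I1, Fin.le_def,
    Fin.ext_iff]
  omega

lemma Iic_C2 : Finset.Iic (C2 n hn) = Finset.univ.erase (D1 n hn) := by
  ext x
  simp only [Finset.mem_Iic, Finset.mem_erase, Finset.mem_univ, and_true, C2, D1]
  rw [Fin.le_def, Fin.ne_iff_vne]
  have := x.isLt
  simp only [Fin.val_mk]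
  omega

lemma sum_e (s : Finset (Fin n)) :
    ∑ i ∈ s, mgE n hn ε i
      = ε * ((if I0 n hn ∈ s then 1 else 0) - (if I1 n hn ∈ s then 1 else 0)) := by
  simp only [mgE, ← Finset.mul_sum, Finset.sum_sub_distrib, Finset.sum_ite_eq' s]

lemma sum_f (s : Finset (Fin n)) :
    ∑ j ∈ s, mgF n hn j
      = (if C2 n hn ∈ s then 1 else 0) - (if D1 n hn ∈ s then 1 else 0) := by
  simp only [mgF, Finset.sum_sub_distrib, Finset.sum_ite_eq' s]

lemma colsum (A : Fin n → Fin n → ℤ) (i j : Fin n) :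
    ∑ i' ∈ Finset.Iic i, mgStep n hn ε A i' j
      = (∑ i' ∈ Finset.Iic i, A i' j)
        + ε * (1 - (if I1 n hn ≤ i then 1 else 0)) * mgF n hn j := by
  simp only [mgStep, Finset.sum_add_distrib, ← Finset.sum_mul, sum_e, Finset.mem_Iic]
  rw [if_pos (show I0 n hn ≤ i from by simp [I0, Fin.le_def])]

lemma rowsum (A : Fin n → Fin n → ℤ) (i j : Fin n) :
    ∑ j' ∈ Finset.Iic j, mgStep n hn ε A i j'
      = (∑ j' ∈ Finset.Iic j, A i j')
        + mgE n hn ε i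
          * ((if C2 n hn ≤ j then 1 else 0) - (if D1 n hn ≤ j then 1 else 0)) := by
  simp only [mgStep, Finset.sum_add_distrib, ← Finset.mul_sum, sum_f, Finset.mem_Iic]

lemma colsum_univ (A : Fin n → Fin n → ℤ) (j : Fin n) :
    ∑ i, mgStep n hn ε A i j = ∑ i, A i j := by
  simp only [mgStep, Finset.sum_add_distrib, ← Finset.sum_mul, sum_e, Finset.mem_univ,
    if_pos]
  ring

lemma rowsum_univ (A : Fin n → Fin n → ℤ) (i : Fin n) :
    ∑ j, mgStep n hn ε A i j = ∑ j, A i j := by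
  simp only [mgStep, Finset.sum_add_distrib, ← Finset.mul_sum, sum_f, Finset.mem_univ,
    if_pos]
  ring

lemma row0_zero (A : Fin n → Fin n → ℤ) (hA : IsSquareSign n A) {p q : Fin n} (hq : q ≠ p)
    (hp : A (I0 n hn) p = 1) : A (I0 n hn) q = 0 := by
  have hnn : ∀ j, 0 ≤ A (I0 n hn) j := by
    intro j
    have := (hA.2.2.2.1 (I0 n hn) j).1
    rwa [Iic_I0, Finset.sum_singleton] at this
  have hsum : ∑ j, A (I0 n hn) j = 1 := hA.2.2.1 _
  have h0 : ∑ j ∈ Finset.univ.erase p, A (I0 n hn) j = 0 := by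
    rw [Finset.sum_erase_eq_sub (Finset.mem_univ p), hsum, hp]; ring
  exact (Finset.sum_eq_zero_iff_of_nonneg (fun j _ => hnn j)).mp h0 q (by simp [hq])


lemma spec_e1 (A : Fin n → Fin n → ℤ) (i j : ℕ) (hi : i + 2 < n) (hj : j + 2 < n) :
    ∑ j' ∈ Finset.Iic (⟨j, by omega⟩ : Fin n), mgStep n hn ε A ⟨i + 1, by omega⟩ j'
      = ∑ j' ∈ Finset.Iic (⟨j, by omega⟩ : Fin n), A ⟨i + 1, by omega⟩ j' := by
  rw [rowsum]
  have hc : ¬ (C2 n hn ≤ (⟨j, by omega⟩ : Fin n)) := by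
    rw [C2, Fin.mk_le_mk]; omega
  have hd : ¬ (D1 n hn ≤ (⟨j, by omega⟩ : Fin n)) := by
    rw [D1, Fin.mk_le_mk]; omega
  rw [if_neg hc, if_neg hd]; ring

lemma spec_e2 (A : Fin n → Fin n → ℤ) (i j : ℕ) (hi : i + 2 < n) (hj : j + 2 < n) :
    ∑ i' ∈ Finset.Iic (⟨i + 1, by omega⟩ : Fin n), mgStep n hn ε A i' ⟨j + 1, by omega⟩
      = ∑ i' ∈ Finset.Iic (⟨i + 1, by omega⟩ : Fin n), A i' ⟨j + 1, by omega⟩ := by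
  rw [colsum]
  have h1 : I1 n hn ≤ (⟨i + 1, by omega⟩ : Fin n) := by
    rw [I1, Fin.mk_le_mk]; omega
  rw [if_pos h1]; ring

lemma spec_e3 (A : Fin n → Fin n → ℤ) (i j : ℕ) (hi : i + 2 < n) (hj : j + 2 < n) :
    ∑ i' ∈ Finset.Iic (⟨i, by omega⟩ : Fin n), mgStep n hn ε A i' ⟨j, by omega⟩
      = ∑ i' ∈ Finset.Iic (⟨i, by omega⟩ : Fin n), A i' ⟨j, by omega⟩ := by
  rw [colsum]
  have hc : (⟨j, by omega⟩ : Fin n) ≠ C2 n hn :=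
    Fin.ne_of_val_ne (by simp only [C2, Fin.val_mk]; omega)
  have hd : (⟨j, by omega⟩ : Fin n) ≠ D1 n hn :=
    Fin.ne_of_val_ne (by simp only [D1, Fin.val_mk]; omega)
  rw [mgF_eq0 hc hd]; ring

lemma step_special (A : Fin n → Fin n → ℤ) (hA : IsMagog n A) :
    ∀ (i j : ℕ) (hi : i + 2 < n) (hj : j + 2 < n),
      0 ≤ (∑ j' ∈ Finset.Iic (⟨j, by omega⟩ : Fin n), mgStep n hn ε A ⟨i + 1, by omega⟩ j')
        + (∑ i' ∈ Finset.Iic (⟨i + 1, by omega⟩ : Fin n), mgStep n hn ε A i' ⟨j + 1, by omega⟩)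
        - (∑ i' ∈ Finset.Iic (⟨i, by omega⟩ : Fin n), mgStep n hn ε A i' ⟨j, by omega⟩) := by
  intro i j hi hj
  rw [spec_e1 A i j hi hj, spec_e2 A i j hi hj, spec_e3 A i j hi hj]
  exact hA.2 i j hi hj

set_option maxHeartbeats 1000000 in
lemma step_magog (A : Fin n → Fin n → ℤ) (hε : ε = 1 ∨ ε = -1) (hA : IsMagog n A)
    (h0c : 2 * A (I0 n hn) (C2 n hn) = 1 - ε)
    (h0d : 2 * A (I0 n hn) (D1 n hn) = 1 + ε) :
    IsMagog n (mgStep n hn ε A) := by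
  obtain ⟨⟨hent, hcol, hrow, hpc, hpr⟩, hsp⟩ := hA
  -- column-partial facts at row 1
  have hpc1 : ∀ j, 0 ≤ A (I0 n hn) j + A (I1 n hn) j ∧ A (I0 n hn) j + A (I1 n hn) j ≤ 1 := by
    intro j
    have := hpc (I1 n hn) j
    rwa [Iic_I1, Finset.sum_pair ne_I0_I1] at this
  refine ⟨⟨?_, ?_, ?_, ?_, ?_⟩, ?_⟩
  · -- entries
    intro i j
    rcases eq_or_ne i (I0 n hn) with rfl | hi0
    · rcases eq_or_ne j (C2 n hn) with rfl | hjc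
      · have : mgStep n hn ε A (I0 n hn) (C2 n hn) = A (I0 n hn) (C2 n hn) + ε := by
          rw [mgStep, mgE_I0, mgF_C2]; ring
        rw [this]; omega
      · rcases eq_or_ne j (D1 n hn) with rfl | hjd
        · have : mgStep n hn ε A (I0 n hn) (D1 n hn) = A (I0 n hn) (D1 n hn) - ε := by
            rw [mgStep, mgE_I0, mgF_D1]; ring
          rw [this]; omega
        · have : mgStep n hn ε A (I0 n hn) j = A (I0 n hn) j := by
            rw [mgStep, mgF_eq0 hjc hjd]; ring
          rw [this]; exact hent _ _
    · rcases eq_or_ne i (I1 n hn) with rfl | hi1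
      · rcases eq_or_ne j (C2 n hn) with rfl | hjc
        · have : mgStep n hn ε A (I1 n hn) (C2 n hn) = A (I1 n hn) (C2 n hn) - ε := by
            rw [mgStep, mgE_I1, mgF_C2]; ring
          rw [this]
          have := hpc1 (C2 n hn)
          omega
        · rcases eq_or_ne j (D1 n hn) with rfl | hjd
          · have : mgStep n hn ε A (I1 n hn) (D1 n hn) = A (I1 n hn) (D1 n hn) + ε := by
              rw [mgStep, mgE_I1, mgF_D1]; ring
            rw [this]
            have := hpc1 (D1 n hn)
            omega
          · have : mgStep n hn ε A (I1 n hn) j = A (I1 n hn) j := by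
              rw [mgStep, mgF_eq0 hjc hjd]; ring
            rw [this]; exact hent _ _
      · have : mgStep n hn ε A i j = A i j := by
          rw [mgStep, mgE_eq0 hi0 hi1]; ring
        rw [this]; exact hent _ _
  · -- column sums
    intro j; rw [colsum_univ]; exact hcol j
  · -- row sums
    intro i; rw [rowsum_univ]; exact hrow i
  · -- partial column sums
    intro i j
    rw [colsum]
    by_cases h1i : I1 n hn ≤ i
    · have hz : ε * (1 - (if I1 n hn ≤ i then 1 else 0)) * mgF n hn j = 0 := by
        rw [if_pos h1i]; ring
      rw [hz, add_zero]; exact hpc i j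
    · have hi : i = I0 n hn := by
        have : i.val < 1 := by
          by_contra h
          exact h1i (by simpa [I1, Fin.le_def] using Nat.le_of_not_lt h)
        exact Fin.ext (by simpa [I0] using Nat.lt_one_iff.mp this)
      subst hi
      rw [if_neg h1i, Iic_I0, Finset.sum_singleton]
      rcases eq_or_ne j (C2 n hn) with rfl | hjc
      · rw [mgF_C2]; omega
      · rcases eq_or_ne j (D1 n hn) with rfl | hjd
        · rw [mgF_D1]; omega
        · rw [mgF_eq0 hjc hjd]
          have := hpc (I0 n hn) j
          rw [Iic_I0, Finset.sum_singleton] at this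
          omega
  · -- partial row sums
    intro i j
    rw [rowsum]
    by_cases hid : D1 n hn ≤ j
    · have hic : C2 n hn ≤ j := le_trans (by simp [C2, D1, Fin.le_def]; omega) hid
      have hz : mgE n hn ε i * ((if C2 n hn ≤ j then 1 else 0) - (if D1 n hn ≤ j then 1 else 0))
          = 0 := by rw [if_pos hic, if_pos hid]; ring
      rw [hz, add_zero]; exact hpr i j
    · by_cases hic : C2 n hn ≤ j
      · have hj : j = C2 n hn := by
          have h1 : n - 2 ≤ j.val := hic
          have h2 : ¬ (n - 1 ≤ j.val) := hid
          have := j.isLt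
          exact Fin.ext (by simp [C2]; omega)
        subst hj
        rw [if_pos hic, if_neg hid]
        have hsumc : ∑ j' ∈ Finset.Iic (C2 n hn), A i j' = 1 - A i (D1 n hn) := by
          rw [Iic_C2, Finset.sum_erase_eq_sub (Finset.mem_univ _), hrow i]
        rw [hsumc]
        rcases eq_or_ne i (I0 n hn) with rfl | hi0
        · rw [mgE_I0]; omega
        · rcases eq_or_ne i (I1 n hn) with rfl | hi1
          · rw [mgE_I1]
            have := hpc1 (D1 n hn)
            omega
          · rw [mgE_eq0 hi0 hi1]
            have := hent i (D1 n hn)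
            omega
      · have hz : mgE n hn ε i * ((if C2 n hn ≤ j then 1 else 0) - (if D1 n hn ≤ j then 1 else 0))
            = 0 := by rw [if_neg hic, if_neg hid]; ring
        rw [hz, add_zero]; exact hpr i j
  · -- special inequalities
    exact step_special A ⟨⟨hent, hcol, hrow, hpc, hpr⟩, hsp⟩

end MagogAux

/-- `|Magog_n(1,n)| = |Magog_n(1,n-1)|`: the number of `n × n` magog matrices
whose `(1,n)` entry is `1` equals the number whose `(1,n-1)` entry is `1`. -/
theorem card_magog_first_row_last_cols (n : ℕ) (hn : 1 < n) :
    Nat.card {A : Fin n → Fin n → ℤ //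
        IsMagog n A ∧ A ⟨0, by omega⟩ ⟨n - 1, by omega⟩ = 1} =
      Nat.card {A : Fin n → Fin n → ℤ //
        IsMagog n A ∧ A ⟨0, by omega⟩ ⟨n - 2, by omega⟩ = 1} := by
  refine Nat.card_congr ?_
  open MagogAux in
  refine
    { toFun := fun x => ⟨mgStep n hn 1 x.1, ?_, ?_⟩
      invFun := fun x => ⟨mgStep n hn (-1) x.1, ?_, ?_⟩
      left_inv := ?_
      right_inv := ?_ }
  · obtain ⟨A, hA, h1⟩ := x
    have h1' : A (I0 n hn) (D1 n hn) = 1 := h1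
    have h0c : A (I0 n hn) (C2 n hn) = 0 :=
      row0_zero A hA.1 ne_C2_D1 h1'
    exact step_magog A (Or.inl rfl) hA (by omega) (by omega)
  · obtain ⟨A, hA, h1⟩ := x
    have h1' : A (I0 n hn) (D1 n hn) = 1 := h1
    have h0c : A (I0 n hn) (C2 n hn) = 0 :=
      row0_zero A hA.1 ne_C2_D1 h1'
    show mgStep n hn 1 A (I0 n hn) (C2 n hn) = 1
    rw [mgStep, mgE_I0, mgF_C2, h0c]; ring
  · obtain ⟨A, hA, h1⟩ := x
    have h1' : A (I0 n hn) (C2 n hn) = 1 := h1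
    have h0d : A (I0 n hn) (D1 n hn) = 0 :=
      row0_zero A hA.1 (Ne.symm ne_C2_D1) h1'
    exact step_magog A (Or.inr rfl) hA (by omega) (by omega)
  · obtain ⟨A, hA, h1⟩ := x
    have h1' : A (I0 n hn) (C2 n hn) = 1 := h1
    have h0d : A (I0 n hn) (D1 n hn) = 0 :=
      row0_zero A hA.1 (Ne.symm ne_C2_D1) h1'
    show mgStep n hn (-1) A (I0 n hn) (D1 n hn) = 1
    rw [mgStep, mgE_I0, mgF_D1, h0d]; ring
  · intro x
    apply Subtype.ext
    funext i j
    show mgStep n hn (-1) (mgStep n hn 1 x.1) i j = x.1 i j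
    simp only [mgStep, mgE]
    ring
  · intro x
    apply Subtype.ext
    funext i j
    show mgStep n hn 1 (mgStep n hn (-1) x.1) i j = x.1 i j
    simp only [mgStep, mgE]
    ring
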